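/- f_D(s) ≥ ⌈s/2⌉ - 1 for all s ≥ 2: the graph G on s vertices consisting of a clique on ⌈s/2⌉ vertices together with ⌊s/2⌋ isolated vertices has the property that for d < ⌈s/2⌉ - 1, neither G nor its complement can be realized as a unit distance graph in R^d. -/

import Mathlib

/-- Key fact: there are no `d + 2` points in `ℝ^d` that are pairwise at unit distance
(since such points would form a regular simplex, hence be affinely independent). -/
lemma no_unit_simplex (d : ℕ) (g : Fin (d + 2) → EuclideanSpace ℝ (Fin d))
    (hg : ∀ i j, i ≠ j → dist (g i) (g j) = 1) : False := by
  set v : Fin (d + 1) → EuclideanSpace ℝ (Fin d) := fun i => g i.succ - g 0 with hv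
  have hnorm : ∀ i, ‖v i‖ = 1 := fun i => by
    simpa [hv, dist_eq_norm] using hg i.succ 0 (Fin.succ_ne_zero i)
  have hij : ∀ i j, (inner ℝ (v i) (v j) : ℝ) = 1/2 + (if i = j then (1/2:ℝ) else 0) := by
    intro i j
    by_cases h : i = j
    · subst h
      rw [real_inner_self_eq_norm_sq, hnorm i]
      norm_num
    · have h1 : ‖v i - v j‖ = 1 := by
        have e : v i - v j = g i.succ - g j.succ := by simp only [hv]; abel
        rw [e, ← dist_eq_norm]
        exact hg i.succ j.succ (fun hh => h (Fin.succ_injective _ hh))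
      have h2 := norm_sub_sq_real (v i) (v j)
      rw [h1, hnorm i, hnorm j] at h2
      simp only [if_neg h, add_zero]
      nlinarith [h2]
  have hli : LinearIndependent ℝ v := by
    rw [Fintype.linearIndependent_iff]
    intro c hc
    have hz : (inner ℝ (∑ i, c i • v i) (∑ j, c j • v j) : ℝ) = 0 := by
      rw [hc]; simp
    rw [inner_sum] at hz
    simp_rw [sum_inner, real_inner_smul_left, real_inner_smul_right, hij, mul_add, mul_ite,
      mul_zero, Finset.sum_add_distrib, Finset.sum_ite_eq', Finset.mem_univ, if_true] at hz
    have e1 : ∑ x : Fin (d+1), ∑ x1 : Fin (d+1), c x1 * (c x * (1/2))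
        = (∑ i, c i)^2 / 2 := by
      simp_rw [← Finset.sum_mul, ← Finset.mul_sum, ← Finset.sum_mul]
      ring
    have e2 : ∑ x : Fin (d+1), c x * (c x * (1/2)) = (∑ i, (c i)^2) / 2 := by
      rw [Finset.sum_div]; apply Finset.sum_congr rfl; intros; ring
    rw [e1, e2] at hz
    have hsq : ∑ i, (c i)^2 = 0 := by
      nlinarith [sq_nonneg (∑ i, c i),
        Finset.sum_nonneg (fun i (_ : i ∈ Finset.univ) => sq_nonneg (c i))]
    intro i
    have := (Finset.sum_eq_zero_iff_of_nonneg (fun i _ => sq_nonneg (c i))).mp hsq i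
      (Finset.mem_univ i)
    exact pow_eq_zero_iff (by norm_num) |>.mp this
  have hcard := hli.fintype_card_le_finrank
  simp [finrank_euclideanSpace] at hcard

/-- The graph on `s` vertices consisting of a clique on the first `⌈s/2⌉` vertices together
with `⌊s/2⌋` isolated vertices. -/
def cliqueHalf (s : ℕ) : SimpleGraph (Fin s) :=
  SimpleGraph.fromRel (fun i j => i.val < (s + 1) / 2 ∧ j.val < (s + 1) / 2)

/-- `f_D(s) ≥ ⌈s/2⌉ - 1` for `s ≥ 2`: if `d < ⌈s/2⌉ - 1` then neither the
graph consisting of a clique on `⌈s/2⌉` vertices plus `⌊s/2⌋` isolated vertices, nor its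
complement, is realizable as a unit distance graph in `ℝ^d`. -/
theorem stmt_18 (s d : ℕ) (hs : 2 ≤ s) (hd : d < (s + 1) / 2 - 1) :
    (¬ ∃ f : Fin s → EuclideanSpace ℝ (Fin d), Function.Injective f ∧
        ∀ u v, (cliqueHalf s).Adj u v → dist (f u) (f v) = 1) ∧
    (¬ ∃ f : Fin s → EuclideanSpace ℝ (Fin d), Function.Injective f ∧
        ∀ u v, (cliqueHalf s)ᶜ.Adj u v → dist (f u) (f v) = 1) := by
  have hh : d + 2 ≤ (s + 1) / 2 := by omega
  have hhs : (s + 1) / 2 ≤ s := by omega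
  constructor
  · rintro ⟨f, hinj, hdist⟩
    set e : Fin (d + 2) → Fin s := fun i => ⟨i.val, by omega⟩ with he
    apply no_unit_simplex d (f ∘ e)
    intro i j hij
    apply hdist
    rw [cliqueHalf, SimpleGraph.fromRel_adj]
    refine ⟨?_, Or.inl ⟨?_, ?_⟩⟩
    · simp only [he, ne_eq, Fin.mk.injEq]
      exact fun h => hij (Fin.ext h)
    · show i.val < (s + 1) / 2; omega
    · show j.val < (s + 1) / 2; omega
  · rintro ⟨f, hinj, hdist⟩
    set e : Fin (d + 2) → Fin s :=
      fun i => ⟨if i.val = 0 then 0 else (s + 1) / 2 + i.val - 1,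
        by have := i.isLt; split_ifs <;> omega⟩ with he
    have hne : ∀ i j : Fin (d + 2), i ≠ j → e i ≠ e j := by
      intro i j hij h
      apply hij
      have := Fin.val_eq_of_eq h
      simp only [he] at this
      have hiv := i.isLt
      have hjv := j.isLt
      apply Fin.ext
      split_ifs at this <;> omega
    apply no_unit_simplex d (f ∘ e)
    intro i j hij
    apply hdist
    rw [SimpleGraph.compl_adj]
    refine ⟨hne i j hij, ?_⟩
    rw [cliqueHalf, SimpleGraph.fromRel_adj]
    rintro ⟨-, h | h⟩ <;>
    · obtain ⟨h1, h2⟩ := h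
      simp only [he] at h1 h2
      have hiv := i.isLt
      have hjv := j.isLt
      have : i.val ≠ j.val := fun hh => hij (Fin.ext hh)
      split_ifs at h1 h2 <;> omega
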